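/- Let B be a quadratic associative division algebra over a field K with involution b ↦ b̄, and define the formal Laurent series ring B((t)) with multiplication twisted by the involution: (tⁱbᵢ)(tʲbⱼ) equals t^{i+j}(bᵢbⱼ) if i,j are even; t^{i+j}(bⱼbᵢ) if i is odd and j even; t^{i+j}(b̄ᵢbⱼ) if i even and j odd; t^{i+j}(bⱼb̄ᵢ) if i,j odd. Then this multiplication makes B((t)) an alternative ring, and ν(Σ tⁱbᵢ) = min{i : bᵢ ≠ 0} is a valuation: ν(xy) = ν(x) + ν(y) for nonzero x, y. -/

import Mathlib

/-- The twisted product of coefficients in `B((t))`: the coefficient contribution of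
`(tⁱb)(tʲc)` is `bc`, `cb`, `b̄c`, `cb̄` according as `(i,j)` has parities
(even, even), (odd, even), (even, odd), (odd, odd). -/
def twistTerm {B : Type*} [Ring B] (conj : B → B) (i j : ℤ) (b c : B) : B :=
  if i % 2 = 0 then (if j % 2 = 0 then b * c else conj b * c)
  else (if j % 2 = 0 then c * b else c * conj b)

namespace TwistedLaurentAux
section
variable {K : Type*} [Field K] {B : Type*} [DivisionRing B] [Algebra K B]
variable (conj : B → B)

lemma tr_comm (htr : ∀ b : B, ∃ k : K, b + conj b = algebraMap K B k)
    (a b : B) : (b + conj b) * a = a * (b + conj b) := by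
  obtain ⟨k, hk⟩ := htr b; rw [hk, Algebra.commutes]

lemma nm_comm (hnm : ∀ b : B, ∃ k : K, b * conj b = algebraMap K B k)
    (a b : B) : (b * conj b) * a = a * (b * conj b) := by
  obtain ⟨k, hk⟩ := hnm b; rw [hk, Algebra.commutes]

lemma conj_mul_self (htr : ∀ b : B, ∃ k : K, b + conj b = algebraMap K B k)
    (b : B) : conj b * b = b * conj b := by
  have h := tr_comm conj htr b b
  rw [add_mul, mul_add] at h
  exact add_left_cancel h

lemma s_comm (hadd : ∀ x y : B, conj (x + y) = conj x + conj y)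
    (hnm : ∀ b : B, ∃ k : K, b * conj b = algebraMap K B k)
    (a b c : B) : (b * conj c + c * conj b) * a = a * (b * conj c + c * conj b) := by
  have key : b * conj c + c * conj b
      = (b + c) * conj (b + c) - b * conj b - c * conj c := by
    rw [hadd]; noncomm_ring
  rw [key, sub_mul, sub_mul, mul_sub, mul_sub,
    nm_comm conj hnm a (b + c), nm_comm conj hnm a b, nm_comm conj hnm a c]

lemma s_eq (htr : ∀ b : B, ∃ k : K, b + conj b = algebraMap K B k)
    (b c : B) : conj c * b + conj b * c = b * conj c + c * conj b := by
  have e1 := tr_comm conj htr b c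
  have e2 := tr_comm conj htr c b
  calc conj c * b + conj b * c
      = ((c + conj c) * b + (b + conj b) * c) - (c * b + b * c) := by noncomm_ring
    _ = (b * (c + conj c) + c * (b + conj b)) - (c * b + b * c) := by rw [e1, e2]
    _ = b * conj c + c * conj b := by noncomm_ring

lemma altL_main (hadd : ∀ x y : B, conj (x + y) = conj x + conj y)
    (hanti : ∀ x y : B, conj (x * y) = conj y * conj x)
    (hinv : ∀ x : B, conj (conj x) = x)
    (htr : ∀ b : B, ∃ k : K, b + conj b = algebraMap K B k)
    (hnm : ∀ b : B, ∃ k : K, b * conj b = algebraMap K B k) (x y : HahnSeries ℤ B) (n i j : ℤ) :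
    twistTerm conj i (n - i) (x.coeff i)
        (twistTerm conj j (n - i - j) (x.coeff j) (y.coeff (n - i - j)))
      + twistTerm conj j (n - j) (x.coeff j)
        (twistTerm conj i (n - j - i) (x.coeff i) (y.coeff (n - j - i)))
    = twistTerm conj (i + j) (n - (i + j))
        (twistTerm conj i (i + j - i) (x.coeff i) (x.coeff (i + j - i))) (y.coeff (n - (i + j)))
      + twistTerm conj (j + i) (n - (j + i))
        (twistTerm conj j (j + i - j) (x.coeff j) (x.coeff (j + i - j))) (y.coeff (n - (j + i))) := by
  have e1 : i + j - i = j := by ring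
  have e2 : j + i - j = i := by ring
  have e3 : n - (i + j) = n - i - j := by ring
  have e4 : n - (j + i) = n - i - j := by ring
  have e5 : n - j - i = n - i - j := by ring
  rw [e1, e2, e3, e4, e5]
  generalize x.coeff i = b
  generalize x.coeff j = c
  generalize y.coeff (n - i - j) = d
  rcases Int.emod_two_eq i with hi | hi <;> rcases Int.emod_two_eq j with hj | hj <;>
    rcases Int.emod_two_eq n with hn | hn
  -- (pi,pj,pn) = (0,0,0), l even : associativity
  · have h1 : (n - i) % 2 = 0 := by omega
    have h2 : (n - i - j) % 2 = 0 := by omega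
    have h3 : (n - j) % 2 = 0 := by omega
    have h4 : (i + j) % 2 = 0 := by omega
    have h5 : (j + i) % 2 = 0 := by omega
    simp [twistTerm, hi, hj, h1, h2, h3, h4, h5]
    noncomm_ring
  -- (0,0,1), l odd
  · have h1 : (n - i) % 2 = 1 := by omega
    have h2 : (n - i - j) % 2 = 1 := by omega
    have h3 : (n - j) % 2 = 1 := by omega
    have h4 : (i + j) % 2 = 0 := by omega
    have h5 : (j + i) % 2 = 0 := by omega
    simp [twistTerm, hi, hj, h1, h2, h3, h4, h5]
    rw [hanti b c, hanti c b]
    noncomm_ring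
  -- (0,1,0), l odd : case (0,1,1)
  · have h1 : (n - i) % 2 = 0 := by omega
    have h2 : (n - i - j) % 2 = 1 := by omega
    have h3 : (n - j) % 2 = 1 := by omega
    have h4 : (i + j) % 2 = 1 := by omega
    have h5 : (j + i) % 2 = 1 := by omega
    simp [twistTerm, hi, hj, h1, h2, h3, h4, h5]
    rw [hanti (conj b) c, hanti b c, hinv b]
    calc b * (d * conj c) + conj b * d * conj c
        = (b + conj b) * (d * conj c) := by noncomm_ring
      _ = (d * conj c) * (b + conj b) := tr_comm conj htr (d * conj c) b
      _ = d * (conj c * b) + d * (conj c * conj b) := by noncomm_ring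
  -- (0,1,1), l even : case (0,1,0)
  · have h1 : (n - i) % 2 = 1 := by omega
    have h2 : (n - i - j) % 2 = 0 := by omega
    have h3 : (n - j) % 2 = 0 := by omega
    have h4 : (i + j) % 2 = 1 := by omega
    have h5 : (j + i) % 2 = 1 := by omega
    simp [twistTerm, hi, hj, h1, h2, h3, h4, h5]
    calc conj b * (d * c) + b * d * c
        = ((b + conj b) * d) * c := by noncomm_ring
      _ = (d * (b + conj b)) * c := by rw [tr_comm conj htr d b]
      _ = d * (conj b * c) + d * (b * c) := by noncomm_ring
  -- (1,0,0), l odd : case (1,0,1)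
  · have h1 : (n - i) % 2 = 1 := by omega
    have h2 : (n - i - j) % 2 = 1 := by omega
    have h3 : (n - j) % 2 = 0 := by omega
    have h4 : (i + j) % 2 = 1 := by omega
    have h5 : (j + i) % 2 = 1 := by omega
    simp [twistTerm, hi, hj, h1, h2, h3, h4, h5]
    rw [hanti c b, hanti (conj c) b, hinv c]
    calc conj c * d * conj b + c * (d * conj b)
        = (c + conj c) * (d * conj b) := by noncomm_ring
      _ = (d * conj b) * (c + conj c) := tr_comm conj htr (d * conj b) c
      _ = d * (conj b * conj c) + d * (conj b * c) := by noncomm_ring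
  -- (1,0,1), l even : case (1,0,0)
  · have h1 : (n - i) % 2 = 0 := by omega
    have h2 : (n - i - j) % 2 = 0 := by omega
    have h3 : (n - j) % 2 = 1 := by omega
    have h4 : (i + j) % 2 = 1 := by omega
    have h5 : (j + i) % 2 = 1 := by omega
    simp [twistTerm, hi, hj, h1, h2, h3, h4, h5]
    calc c * d * b + conj c * (d * b)
        = ((c + conj c) * d) * b := by noncomm_ring
      _ = (d * (c + conj c)) * b := by rw [tr_comm conj htr d c]
      _ = d * (c * b) + d * (conj c * b) := by noncomm_ring
  -- (1,1,0), l even : case (1,1,0)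
  · have h1 : (n - i) % 2 = 1 := by omega
    have h2 : (n - i - j) % 2 = 0 := by omega
    have h3 : (n - j) % 2 = 1 := by omega
    have h4 : (i + j) % 2 = 0 := by omega
    have h5 : (j + i) % 2 = 0 := by omega
    simp [twistTerm, hi, hj, h1, h2, h3, h4, h5]
    calc d * c * conj b + d * b * conj c
        = d * (c * conj b + b * conj c) := by noncomm_ring
      _ = (c * conj b + b * conj c) * d := (s_comm conj hadd hnm d c b).symm
      _ = c * conj b * d + b * conj c * d := by noncomm_ring
  -- (1,1,1), l odd : case (1,1,1)
  · have h1 : (n - i) % 2 = 0 := by omega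
    have h2 : (n - i - j) % 2 = 1 := by omega
    have h3 : (n - j) % 2 = 0 := by omega
    have h4 : (i + j) % 2 = 0 := by omega
    have h5 : (j + i) % 2 = 0 := by omega
    simp [twistTerm, hi, hj, h1, h2, h3, h4, h5]
    rw [hanti c (conj b), hanti b (conj c), hinv b, hinv c]
    calc d * conj c * b + d * conj b * c
        = d * (conj c * b + conj b * c) := by noncomm_ring
      _ = d * (b * conj c + c * conj b) := by rw [s_eq conj htr b c]
      _ = (b * conj c + c * conj b) * d := (s_comm conj hadd hnm d b c).symm
      _ = b * conj c * d + c * conj b * d := by noncomm_ring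

lemma altL_diag (hadd : ∀ x y : B, conj (x + y) = conj x + conj y)
    (hanti : ∀ x y : B, conj (x * y) = conj y * conj x)
    (hinv : ∀ x : B, conj (conj x) = x)
    (htr : ∀ b : B, ∃ k : K, b + conj b = algebraMap K B k)
    (hnm : ∀ b : B, ∃ k : K, b * conj b = algebraMap K B k) (x y : HahnSeries ℤ B) (n i : ℤ) :
    twistTerm conj i (n - i) (x.coeff i)
        (twistTerm conj i (n - i - i) (x.coeff i) (y.coeff (n - i - i)))
    = twistTerm conj (i + i) (n - (i + i))
        (twistTerm conj i (i + i - i) (x.coeff i) (x.coeff (i + i - i))) (y.coeff (n - (i + i))) := by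
  have e1 : i + i - i = i := by ring
  have e3 : n - (i + i) = n - i - i := by ring
  rw [e1, e3]
  generalize x.coeff i = b
  generalize y.coeff (n - i - i) = d
  rcases Int.emod_two_eq i with hi | hi <;> rcases Int.emod_two_eq n with hn | hn
  · have h1 : (n - i) % 2 = 0 := by omega
    have h2 : (n - i - i) % 2 = 0 := by omega
    have h4 : (i + i) % 2 = 0 := by omega
    simp [twistTerm, hi, h1, h2, h4]
    noncomm_ring
  · have h1 : (n - i) % 2 = 1 := by omega
    have h2 : (n - i - i) % 2 = 1 := by omega
    have h4 : (i + i) % 2 = 0 := by omega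
    simp [twistTerm, hi, h1, h2, h4]
    rw [hanti b b]; noncomm_ring
  · have h1 : (n - i) % 2 = 1 := by omega
    have h2 : (n - i - i) % 2 = 0 := by omega
    have h4 : (i + i) % 2 = 0 := by omega
    simp [twistTerm, hi, h1, h2, h4]
    calc d * b * conj b = d * (b * conj b) := by noncomm_ring
      _ = (b * conj b) * d := (nm_comm conj hnm d b).symm
  · have h1 : (n - i) % 2 = 0 := by omega
    have h2 : (n - i - i) % 2 = 1 := by omega
    have h4 : (i + i) % 2 = 0 := by omega
    simp [twistTerm, hi, h1, h2, h4]
    rw [hanti b (conj b), hinv b]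
    calc d * conj b * b = d * (conj b * b) := by noncomm_ring
      _ = d * (b * conj b) := by rw [conj_mul_self conj htr b]
      _ = (b * conj b) * d := (nm_comm conj hnm d b).symm
end

section
variable {K : Type*} [Field K] {B : Type*} [DivisionRing B] [Algebra K B]
variable (conj : B → B)

lemma altR_main (hadd : ∀ x y : B, conj (x + y) = conj x + conj y)
    (hanti : ∀ x y : B, conj (x * y) = conj y * conj x)
    (hinv : ∀ x : B, conj (conj x) = x)
    (htr : ∀ b : B, ∃ k : K, b + conj b = algebraMap K B k)
    (hnm : ∀ b : B, ∃ k : K, b * conj b = algebraMap K B k)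
    (x y : HahnSeries ℤ B) (n j l : ℤ) :
    twistTerm conj (n - l) (n - (n - l))
        (twistTerm conj (n - j - l) (n - l - (n - j - l)) (x.coeff (n - j - l))
          (y.coeff (n - l - (n - j - l)))) (y.coeff (n - (n - l)))
      + twistTerm conj (n - j) (n - (n - j))
        (twistTerm conj (n - l - j) (n - j - (n - l - j)) (x.coeff (n - l - j))
          (y.coeff (n - j - (n - l - j)))) (y.coeff (n - (n - j)))
    = twistTerm conj (n - j - l) (n - (n - j - l)) (x.coeff (n - j - l))
        (twistTerm conj j (n - (n - j - l) - j) (y.coeff j) (y.coeff (n - (n - j - l) - j)))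
      + twistTerm conj (n - l - j) (n - (n - l - j)) (x.coeff (n - l - j))
        (twistTerm conj l (n - (n - l - j) - l) (y.coeff l) (y.coeff (n - (n - l - j) - l))) := by
  have f5 : n - l - j = n - j - l := by ring
  rw [f5]
  have f1 : n - (n - l) = l := by ring
  have f2 : n - l - (n - j - l) = j := by ring
  have f3 : n - (n - j) = j := by ring
  have f4 : n - j - (n - j - l) = l := by ring
  have f6 : n - (n - j - l) = j + l := by ring
  rw [f1, f2, f3, f4, f6]
  have f7 : j + l - j = l := by ring
  have f8 : j + l - l = j := by ring
  rw [f7, f8]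
  generalize x.coeff (n - j - l) = b
  generalize y.coeff j = c
  generalize y.coeff l = d
  rcases Int.emod_two_eq n with hn | hn <;> rcases Int.emod_two_eq j with hj | hj <;>
    rcases Int.emod_two_eq l with hl | hl
  -- (pn,pj,pl)=(0,0,0) → (p,q,r)=(0,0,0)
  · have h1 : (n - l) % 2 = 0 := by omega
    have h2 : (n - j) % 2 = 0 := by omega
    have h3 : (n - j - l) % 2 = 0 := by omega
    have h4 : (j + l) % 2 = 0 := by omega
    simp [twistTerm, hj, hl, h1, h2, h3, h4]
    noncomm_ring
  -- (0,0,1) → (1,0,1)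
  · have h1 : (n - l) % 2 = 1 := by omega
    have h2 : (n - j) % 2 = 0 := by omega
    have h3 : (n - j - l) % 2 = 1 := by omega
    have h4 : (j + l) % 2 = 1 := by omega
    simp [twistTerm, hj, hl, h1, h2, h3, h4]
    rw [hanti c b]
    calc d * (conj b * conj c) + d * conj b * c
        = (d * conj b) * (c + conj c) := by noncomm_ring
      _ = (c + conj c) * (d * conj b) := (tr_comm conj htr (d * conj b) c).symm
      _ = conj c * d * conj b + c * d * conj b := by noncomm_ring
  -- (0,1,0) → (1,1,0)
  · have h1 : (n - l) % 2 = 0 := by omega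
    have h2 : (n - j) % 2 = 1 := by omega
    have h3 : (n - j - l) % 2 = 1 := by omega
    have h4 : (j + l) % 2 = 1 := by omega
    simp [twistTerm, hj, hl, h1, h2, h3, h4]
    rw [hanti d b]
    calc c * conj b * d + c * (conj b * conj d)
        = (c * conj b) * (d + conj d) := by noncomm_ring
      _ = (d + conj d) * (c * conj b) := (tr_comm conj htr (c * conj b) d).symm
      _ = d * c * conj b + conj d * c * conj b := by noncomm_ring
  -- (0,1,1) → (0,1,1)
  · have h1 : (n - l) % 2 = 1 := by omega
    have h2 : (n - j) % 2 = 1 := by omega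
    have h3 : (n - j - l) % 2 = 0 := by omega
    have h4 : (j + l) % 2 = 0 := by omega
    simp [twistTerm, hj, hl, h1, h2, h3, h4]
    rw [hanti (conj b) c, hanti (conj b) d, hinv b]
    calc d * (conj c * b) + c * (conj d * b)
        = (d * conj c + c * conj d) * b := by noncomm_ring
      _ = b * (d * conj c + c * conj d) := s_comm conj hadd hnm b d c
      _ = b * (d * conj c) + b * (c * conj d) := by noncomm_ring
  -- (1,0,0) → (1,0,0)
  · have h1 : (n - l) % 2 = 1 := by omega
    have h2 : (n - j) % 2 = 1 := by omega
    have h3 : (n - j - l) % 2 = 1 := by omega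
    have h4 : (j + l) % 2 = 0 := by omega
    simp [twistTerm, hj, hl, h1, h2, h3, h4]
    noncomm_ring
  -- (1,0,1) → (0,0,1)
  · have h1 : (n - l) % 2 = 0 := by omega
    have h2 : (n - j) % 2 = 1 := by omega
    have h3 : (n - j - l) % 2 = 0 := by omega
    have h4 : (j + l) % 2 = 1 := by omega
    simp [twistTerm, hj, hl, h1, h2, h3, h4]
    rw [hanti b c]
    calc conj c * conj b * d + c * (conj b * d)
        = ((c + conj c) * conj b) * d := by noncomm_ring
      _ = (conj b * (c + conj c)) * d := by rw [tr_comm conj htr (conj b) c]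
      _ = conj b * (conj c * d) + conj b * (c * d) := by noncomm_ring
  -- (1,1,0) → (0,1,0)
  · have h1 : (n - l) % 2 = 1 := by omega
    have h2 : (n - j) % 2 = 0 := by omega
    have h3 : (n - j - l) % 2 = 0 := by omega
    have h4 : (j + l) % 2 = 1 := by omega
    simp [twistTerm, hj, hl, h1, h2, h3, h4]
    rw [hanti b d]
    calc d * (conj b * c) + conj d * conj b * c
        = ((d + conj d) * conj b) * c := by noncomm_ring
      _ = (conj b * (d + conj d)) * c := by rw [tr_comm conj htr (conj b) d]
      _ = conj b * (d * c) + conj b * (conj d * c) := by noncomm_ring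
  -- (1,1,1) → (1,1,1)
  · have h1 : (n - l) % 2 = 0 := by omega
    have h2 : (n - j) % 2 = 0 := by omega
    have h3 : (n - j - l) % 2 = 1 := by omega
    have h4 : (j + l) % 2 = 0 := by omega
    simp [twistTerm, hj, hl, h1, h2, h3, h4]
    rw [hanti c (conj b), hanti d (conj b), hinv b]
    calc b * conj c * d + b * conj d * c
        = b * (conj c * d + conj d * c) := by noncomm_ring
      _ = b * (d * conj c + c * conj d) := by rw [s_eq conj htr d c]
      _ = (d * conj c + c * conj d) * b := (s_comm conj hadd hnm b d c).symm
      _ = d * conj c * b + c * conj d * b := by noncomm_ring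

lemma altR_diag (hadd : ∀ x y : B, conj (x + y) = conj x + conj y)
    (hanti : ∀ x y : B, conj (x * y) = conj y * conj x)
    (hinv : ∀ x : B, conj (conj x) = x)
    (htr : ∀ b : B, ∃ k : K, b + conj b = algebraMap K B k)
    (hnm : ∀ b : B, ∃ k : K, b * conj b = algebraMap K B k)
    (x y : HahnSeries ℤ B) (n j : ℤ) :
    twistTerm conj (n - j) (n - (n - j))
        (twistTerm conj (n - j - j) (n - j - (n - j - j)) (x.coeff (n - j - j))
          (y.coeff (n - j - (n - j - j)))) (y.coeff (n - (n - j)))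
    = twistTerm conj (n - j - j) (n - (n - j - j)) (x.coeff (n - j - j))
        (twistTerm conj j (n - (n - j - j) - j) (y.coeff j) (y.coeff (n - (n - j - j) - j))) := by
  have g1 : n - (n - j) = j := by ring
  have g2 : n - j - (n - j - j) = j := by ring
  have g3 : n - (n - j - j) = j + j := by ring
  rw [g1, g2, g3]
  have g4 : j + j - j = j := by ring
  rw [g4]
  generalize x.coeff (n - j - j) = b
  generalize y.coeff j = c
  rcases Int.emod_two_eq n with hn | hn <;> rcases Int.emod_two_eq j with hj | hj
  · have h1 : (n - j) % 2 = 0 := by omega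
    have h2 : (n - j - j) % 2 = 0 := by omega
    have h3 : (j + j) % 2 = 0 := by omega
    simp [twistTerm, hj, h1, h2, h3]
    noncomm_ring
  · have h1 : (n - j) % 2 = 1 := by omega
    have h2 : (n - j - j) % 2 = 0 := by omega
    have h3 : (j + j) % 2 = 0 := by omega
    simp [twistTerm, hj, h1, h2, h3]
    rw [hanti (conj b) c, hinv b]
    calc c * (conj c * b) = (c * conj c) * b := by noncomm_ring
      _ = b * (c * conj c) := nm_comm conj hnm b c
  · have h1 : (n - j) % 2 = 1 := by omega
    have h2 : (n - j - j) % 2 = 1 := by omega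
    have h3 : (j + j) % 2 = 0 := by omega
    simp [twistTerm, hj, h1, h2, h3]
    noncomm_ring
  · have h1 : (n - j) % 2 = 0 := by omega
    have h2 : (n - j - j) % 2 = 1 := by omega
    have h3 : (j + j) % 2 = 0 := by omega
    simp [twistTerm, hj, h1, h2, h3]
    rw [hanti c (conj b), hinv b]
    calc b * conj c * c = b * (conj c * c) := by noncomm_ring
      _ = b * (c * conj c) := by rw [conj_mul_self conj htr c]
      _ = (c * conj c) * b := (nm_comm conj hnm b c).symm
end

section
variable {B : Type*} [Ring B] (conj : B → B)

lemma twistTerm_zero_right (i j : ℤ) (b : B) : twistTerm conj i j b 0 = 0 := by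
  unfold twistTerm; split_ifs <;> simp

lemma twistTerm_zero_left (h0 : conj 0 = 0) (i j : ℤ) (c : B) :
    twistTerm conj i j (0 : B) c = 0 := by
  unfold twistTerm; split_ifs <;> simp [h0]

lemma twistTerm_ne_zero {i j : ℤ} {b c : B} (h : twistTerm conj i j b c ≠ 0)
    (h0 : conj 0 = 0) : b ≠ 0 ∧ c ≠ 0 := by
  constructor
  · rintro rfl; exact h (twistTerm_zero_left conj h0 i j c)
  · rintro rfl; exact h (twistTerm_zero_right conj i j b)

lemma twistTerm_sum_right {ι : Type*} (s : Finset ι) (i j : ℤ) (b : B) (h : ι → B) :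
    twistTerm conj i j b (∑ k ∈ s, h k) = ∑ k ∈ s, twistTerm conj i j b (h k) := by
  unfold twistTerm; split_ifs <;> simp [Finset.mul_sum, Finset.sum_mul]

lemma twistTerm_sum_left (hadd : ∀ x y : B, conj (x + y) = conj x + conj y)
    {ι : Type*} (s : Finset ι) (i j : ℤ) (c : B) (h : ι → B) :
    twistTerm conj i j (∑ k ∈ s, h k) c = ∑ k ∈ s, twistTerm conj i j (h k) c := by
  have hc : conj (∑ k ∈ s, h k) = ∑ k ∈ s, conj (h k) :=
    map_sum (AddMonoidHom.mk' conj hadd) h s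
  unfold twistTerm; split_ifs <;> simp [hc, Finset.mul_sum, Finset.sum_mul]
end

section
variable {B : Type*} [DivisionRing B] (conj : B → B)
  (m : HahnSeries ℤ B → HahnSeries ℤ B → HahnSeries ℤ B)
  (hm : ∀ (x y : HahnSeries ℤ B) (n : ℤ), (m x y).coeff n =
      ∑ᶠ i : ℤ, twistTerm conj i (n - i) (x.coeff i) (y.coeff (n - i)))
  (h0 : conj 0 = 0)

include hm h0 in
lemma coeff_eq_sum (x y : HahnSeries ℤ B) (n : ℤ) (S : Finset ℤ)
    (hS : ∀ i, x.coeff i ≠ 0 → y.coeff (n - i) ≠ 0 → i ∈ S) :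
    (m x y).coeff n = ∑ i ∈ S, twistTerm conj i (n - i) (x.coeff i) (y.coeff (n - i)) := by
  rw [hm]
  refine finsum_eq_finset_sum_of_support_subset _ ?_
  intro i hi
  simp only [Function.mem_support] at hi
  obtain ⟨hb, hc⟩ := twistTerm_ne_zero conj hi h0
  exact Finset.mem_coe.2 (hS i hb hc)

include hm h0 in
lemma m_zero_left (y : HahnSeries ℤ B) : m 0 y = 0 := by
  ext n
  rw [coeff_eq_sum conj m hm h0 0 y n ∅ (fun i hi _ => absurd rfl hi)]
  simp

include hm h0 in
lemma m_zero_right (x : HahnSeries ℤ B) : m x 0 = 0 := by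
  ext n
  rw [coeff_eq_sum conj m hm h0 x 0 n ∅ (fun i _ hi => absurd rfl hi)]
  simp

include hm h0 in
lemma coeff_small (x y : HahnSeries ℤ B) (k : ℤ) (hk : k < x.order + y.order) :
    (m x y).coeff k = 0 := by
  rw [coeff_eq_sum conj m hm h0 x y k ∅ ?_, Finset.sum_empty]
  intro i h1 h2
  have a1 := HahnSeries.order_le_of_coeff_ne_zero h1
  have a2 := HahnSeries.order_le_of_coeff_ne_zero h2
  exact absurd hk (by omega)

include hm h0 in
lemma val_lemma (hinv : ∀ x : B, conj (conj x) = x)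
    (x y : HahnSeries ℤ B) (hx : x ≠ 0) (hy : y ≠ 0) :
    m x y ≠ 0 ∧ (m x y).order = x.order + y.order := by
  have hxa := mt HahnSeries.coeff_order_eq_zero.mp hx
  have hyb := mt HahnSeries.coeff_order_eq_zero.mp hy
  have hlead : (m x y).coeff (x.order + y.order)
      = twistTerm conj x.order y.order (x.coeff x.order) (y.coeff y.order) := by
    rw [coeff_eq_sum conj m hm h0 x y (x.order + y.order) {x.order} ?_,
      Finset.sum_singleton, add_sub_cancel_left]
    intro i h1 h2
    have a1 := HahnSeries.order_le_of_coeff_ne_zero h1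
    have a2 := HahnSeries.order_le_of_coeff_ne_zero h2
    simp only [Finset.mem_singleton]
    omega
  have hcne : (m x y).coeff (x.order + y.order) ≠ 0 := by
    rw [hlead]
    have c1 : conj (x.coeff x.order) ≠ 0 := fun h => hxa (by
      rw [← hinv (x.coeff x.order), h, h0])
    unfold twistTerm
    split_ifs <;> exact mul_ne_zero (by assumption) (by assumption)
  have hmne : m x y ≠ 0 := fun h => hcne (by rw [h]; simp)
  refine ⟨hmne, le_antisymm (HahnSeries.order_le_of_coeff_ne_zero hcne) ?_⟩
  by_contra hlt
  push_neg at hlt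
  exact (mt HahnSeries.coeff_order_eq_zero.mp hmne) (coeff_small conj m hm h0 x y _ hlt)
end


section
variable {K : Type*} [Field K] {B : Type*} [DivisionRing B] [Algebra K B]
  (conj : B → B)
  (m : HahnSeries ℤ B → HahnSeries ℤ B → HahnSeries ℤ B)
  (hm : ∀ (x y : HahnSeries ℤ B) (n : ℤ), (m x y).coeff n =
      ∑ᶠ i : ℤ, twistTerm conj i (n - i) (x.coeff i) (y.coeff (n - i)))
  (h0 : conj 0 = 0)

include hm h0 in
lemma leftalt (hadd : ∀ x y : B, conj (x + y) = conj x + conj y)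
    (hanti : ∀ x y : B, conj (x * y) = conj y * conj x)
    (hinv : ∀ x : B, conj (conj x) = x)
    (htr : ∀ b : B, ∃ k : K, b + conj b = algebraMap K B k)
    (hnm : ∀ b : B, ∃ k : K, b * conj b = algebraMap K B k)
    (x y : HahnSeries ℤ B) :
    m x (m x y) = m (m x x) y := by
  ext n
  set I : Finset ℤ := Finset.Icc x.order (n - x.order - y.order) with hI
  set Kf : Finset ℤ := Finset.Icc (x.order + x.order) (n - y.order) with hK
  have hmemI : ∀ i : ℤ, x.order ≤ i → i ≤ n - x.order - y.order → i ∈ I := by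
    intro i h1 h2; rw [hI, Finset.mem_Icc]; exact ⟨h1, h2⟩
  have L3 : (m x (m x y)).coeff n
      = ∑ p ∈ I ×ˢ I, twistTerm conj p.1 (n - p.1) (x.coeff p.1)
          (twistTerm conj p.2 (n - p.1 - p.2) (x.coeff p.2) (y.coeff (n - p.1 - p.2))) := by
    have L1 : (m x (m x y)).coeff n
        = ∑ i ∈ I, twistTerm conj i (n - i) (x.coeff i) ((m x y).coeff (n - i)) := by
      apply coeff_eq_sum conj m hm h0
      intro i h1 h2
      have a1 := HahnSeries.order_le_of_coeff_ne_zero h1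
      have a2 : ¬ (n - i < x.order + y.order) := fun hlt => h2 (coeff_small conj m hm h0 x y _ hlt)
      exact hmemI i (by omega) (by omega)
    rw [L1, Finset.sum_product' I I (fun i j => twistTerm conj i (n - i) (x.coeff i)
          (twistTerm conj j (n - i - j) (x.coeff j) (y.coeff (n - i - j))))]
    refine Finset.sum_congr rfl fun i hi => ?_
    have hi' := Finset.mem_Icc.1 (hI ▸ hi)
    have L2 : (m x y).coeff (n - i)
        = ∑ j ∈ I, twistTerm conj j (n - i - j) (x.coeff j) (y.coeff (n - i - j)) := by
      apply coeff_eq_sum conj m hm h0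
      intro j h1 h2
      have a1 := HahnSeries.order_le_of_coeff_ne_zero h1
      have a2 := HahnSeries.order_le_of_coeff_ne_zero h2
      exact hmemI j (by omega) (by omega)
    rw [L2, twistTerm_sum_right conj]
  have R3 : (m (m x x) y).coeff n
      = ∑ p ∈ Kf ×ˢ I, twistTerm conj p.1 (n - p.1)
          (twistTerm conj p.2 (p.1 - p.2) (x.coeff p.2) (x.coeff (p.1 - p.2)))
          (y.coeff (n - p.1)) := by
    have R1 : (m (m x x) y).coeff n
        = ∑ k ∈ Kf, twistTerm conj k (n - k) ((m x x).coeff k) (y.coeff (n - k)) := by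
      apply coeff_eq_sum conj m hm h0
      intro k h1 h2
      have a1 : ¬ (k < x.order + x.order) := fun hlt => h1 (coeff_small conj m hm h0 x x _ hlt)
      have a2 := HahnSeries.order_le_of_coeff_ne_zero h2
      rw [hK, Finset.mem_Icc]; omega
    rw [R1, Finset.sum_product' Kf I (fun k i => twistTerm conj k (n - k)
          (twistTerm conj i (k - i) (x.coeff i) (x.coeff (k - i))) (y.coeff (n - k)))]
    refine Finset.sum_congr rfl fun k hk => ?_
    have hk' := Finset.mem_Icc.1 (hK ▸ hk)
    have R2 : (m x x).coeff k
        = ∑ i ∈ I, twistTerm conj i (k - i) (x.coeff i) (x.coeff (k - i)) := by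
      apply coeff_eq_sum conj m hm h0
      intro i h1 h2
      have a1 := HahnSeries.order_le_of_coeff_ne_zero h1
      have a2 := HahnSeries.order_le_of_coeff_ne_zero h2
      exact hmemI i (by omega) (by omega)
    rw [R2, twistTerm_sum_left conj hadd]
  have R4 : ∑ p ∈ Kf ×ˢ I, twistTerm conj p.1 (n - p.1)
          (twistTerm conj p.2 (p.1 - p.2) (x.coeff p.2) (x.coeff (p.1 - p.2)))
          (y.coeff (n - p.1))
      = ∑ᶠ p : ℤ × ℤ, twistTerm conj p.1 (n - p.1)
          (twistTerm conj p.2 (p.1 - p.2) (x.coeff p.2) (x.coeff (p.1 - p.2)))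
          (y.coeff (n - p.1)) := by
    refine (finsum_eq_finset_sum_of_support_subset _ ?_).symm
    rintro ⟨k, i⟩ hp
    simp only [Function.mem_support] at hp
    obtain ⟨hu, hv⟩ := twistTerm_ne_zero conj hp h0
    obtain ⟨h1, h2⟩ := twistTerm_ne_zero conj hu h0
    have a1 := HahnSeries.order_le_of_coeff_ne_zero h1
    have a2 := HahnSeries.order_le_of_coeff_ne_zero h2
    have a3 := HahnSeries.order_le_of_coeff_ne_zero hv
    simp only [Finset.coe_product, Set.mem_prod, Finset.mem_coe, hI, hK, Finset.mem_Icc]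
    omega
  have R5 : ∑ᶠ p : ℤ × ℤ, twistTerm conj p.1 (n - p.1)
          (twistTerm conj p.2 (p.1 - p.2) (x.coeff p.2) (x.coeff (p.1 - p.2)))
          (y.coeff (n - p.1))
      = ∑ᶠ p : ℤ × ℤ, twistTerm conj (p.1 + p.2) (n - (p.1 + p.2))
          (twistTerm conj p.1 (p.1 + p.2 - p.1) (x.coeff p.1) (x.coeff (p.1 + p.2 - p.1)))
          (y.coeff (n - (p.1 + p.2))) := by
    have := finsum_comp_equiv (M := B)
      (⟨fun p : ℤ × ℤ => (p.1 + p.2, p.1), fun q : ℤ × ℤ => (q.2, q.1 - q.2),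
        fun p => by simp, fun q => by simp⟩ : (ℤ × ℤ) ≃ (ℤ × ℤ))
      (f := fun p : ℤ × ℤ => twistTerm conj p.1 (n - p.1)
          (twistTerm conj p.2 (p.1 - p.2) (x.coeff p.2) (x.coeff (p.1 - p.2)))
          (y.coeff (n - p.1)))
    exact this.symm
  have R6 : ∑ᶠ p : ℤ × ℤ, twistTerm conj (p.1 + p.2) (n - (p.1 + p.2))
          (twistTerm conj p.1 (p.1 + p.2 - p.1) (x.coeff p.1) (x.coeff (p.1 + p.2 - p.1)))
          (y.coeff (n - (p.1 + p.2)))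
      = ∑ p ∈ I ×ˢ I, twistTerm conj (p.1 + p.2) (n - (p.1 + p.2))
          (twistTerm conj p.1 (p.1 + p.2 - p.1) (x.coeff p.1) (x.coeff (p.1 + p.2 - p.1)))
          (y.coeff (n - (p.1 + p.2))) := by
    refine finsum_eq_finset_sum_of_support_subset _ ?_
    rintro ⟨i, j⟩ hp
    simp only [Function.mem_support] at hp
    obtain ⟨hu, hv⟩ := twistTerm_ne_zero conj hp h0
    obtain ⟨h1, h2⟩ := twistTerm_ne_zero conj hu h0
    have a1 := HahnSeries.order_le_of_coeff_ne_zero h1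
    have a2 := HahnSeries.order_le_of_coeff_ne_zero h2
    have a3 := HahnSeries.order_le_of_coeff_ne_zero hv
    simp only [Finset.coe_product, Set.mem_prod, Finset.mem_coe, hI, Finset.mem_Icc] at *
    omega
  rw [L3, R3, R4, R5, R6]
  have key : ∑ p ∈ I ×ˢ I,
      (twistTerm conj p.1 (n - p.1) (x.coeff p.1)
          (twistTerm conj p.2 (n - p.1 - p.2) (x.coeff p.2) (y.coeff (n - p.1 - p.2)))
        - twistTerm conj (p.1 + p.2) (n - (p.1 + p.2))
          (twistTerm conj p.1 (p.1 + p.2 - p.1) (x.coeff p.1) (x.coeff (p.1 + p.2 - p.1)))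
          (y.coeff (n - (p.1 + p.2)))) = 0 := by
    refine Finset.sum_involution (fun p _ => Prod.swap p) ?_ ?_ ?_ ?_
    · rintro ⟨i, j⟩ _
      simp only [Prod.fst_swap, Prod.snd_swap, Prod.swap_prod_mk]
      rw [sub_add_sub_comm, sub_eq_zero]
      exact altL_main conj hadd hanti hinv htr hnm x y n i j
    · rintro ⟨i, j⟩ _ hne heq
      apply hne
      have : j = i := (Prod.ext_iff.1 heq).1
      subst this
      simp only [sub_eq_zero]
      exact altL_diag conj hadd hanti hinv htr hnm x y n j
    · rintro ⟨i, j⟩ hp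
      simp only [Finset.mem_product] at hp ⊢
      exact ⟨hp.2, hp.1⟩
    · rintro ⟨i, j⟩ _
      simp
  rw [Finset.sum_sub_distrib] at key
  exact sub_eq_zero.mp key

include hm h0 in
lemma rightalt (hadd : ∀ x y : B, conj (x + y) = conj x + conj y)
    (hanti : ∀ x y : B, conj (x * y) = conj y * conj x)
    (hinv : ∀ x : B, conj (conj x) = x)
    (htr : ∀ b : B, ∃ k : K, b + conj b = algebraMap K B k)
    (hnm : ∀ b : B, ∃ k : K, b * conj b = algebraMap K B k)
    (x y : HahnSeries ℤ B) :
    m (m x y) y = m x (m y y) := by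
  ext n
  set J : Finset ℤ := Finset.Icc y.order (n - x.order - y.order) with hJ
  set Kf : Finset ℤ := Finset.Icc (x.order + y.order) (n - y.order) with hK
  set Ix : Finset ℤ := Finset.Icc x.order (n - y.order - y.order) with hIx
  have hmemJ : ∀ i : ℤ, y.order ≤ i → i ≤ n - x.order - y.order → i ∈ J := by
    intro i h1 h2; rw [hJ, Finset.mem_Icc]; exact ⟨h1, h2⟩
  have L3 : (m (m x y) y).coeff n
      = ∑ p ∈ Kf ×ˢ Ix, twistTerm conj p.1 (n - p.1)
          (twistTerm conj p.2 (p.1 - p.2) (x.coeff p.2) (y.coeff (p.1 - p.2)))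
          (y.coeff (n - p.1)) := by
    have L1 : (m (m x y) y).coeff n
        = ∑ k ∈ Kf, twistTerm conj k (n - k) ((m x y).coeff k) (y.coeff (n - k)) := by
      apply coeff_eq_sum conj m hm h0
      intro k h1 h2
      have a1 : ¬ (k < x.order + y.order) := fun hlt => h1 (coeff_small conj m hm h0 x y _ hlt)
      have a2 := HahnSeries.order_le_of_coeff_ne_zero h2
      rw [hK, Finset.mem_Icc]; omega
    rw [L1, Finset.sum_product' Kf Ix (fun k i => twistTerm conj k (n - k)
          (twistTerm conj i (k - i) (x.coeff i) (y.coeff (k - i))) (y.coeff (n - k)))]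
    refine Finset.sum_congr rfl fun k hk => ?_
    have hk' := Finset.mem_Icc.1 (hK ▸ hk)
    have L2 : (m x y).coeff k
        = ∑ i ∈ Ix, twistTerm conj i (k - i) (x.coeff i) (y.coeff (k - i)) := by
      apply coeff_eq_sum conj m hm h0
      intro i h1 h2
      have a1 := HahnSeries.order_le_of_coeff_ne_zero h1
      have a2 := HahnSeries.order_le_of_coeff_ne_zero h2
      rw [hIx, Finset.mem_Icc]; omega
    rw [L2, twistTerm_sum_left conj hadd]
  have L4 : ∑ p ∈ Kf ×ˢ Ix, twistTerm conj p.1 (n - p.1)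
          (twistTerm conj p.2 (p.1 - p.2) (x.coeff p.2) (y.coeff (p.1 - p.2)))
          (y.coeff (n - p.1))
      = ∑ᶠ p : ℤ × ℤ, twistTerm conj p.1 (n - p.1)
          (twistTerm conj p.2 (p.1 - p.2) (x.coeff p.2) (y.coeff (p.1 - p.2)))
          (y.coeff (n - p.1)) := by
    refine (finsum_eq_finset_sum_of_support_subset _ ?_).symm
    rintro ⟨k, i⟩ hp
    simp only [Function.mem_support] at hp
    obtain ⟨hu, hv⟩ := twistTerm_ne_zero conj hp h0
    obtain ⟨h1, h2⟩ := twistTerm_ne_zero conj hu h0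
    have a1 := HahnSeries.order_le_of_coeff_ne_zero h1
    have a2 := HahnSeries.order_le_of_coeff_ne_zero h2
    have a3 := HahnSeries.order_le_of_coeff_ne_zero hv
    simp only [Finset.coe_product, Set.mem_prod, Finset.mem_coe, hIx, hK, Finset.mem_Icc]
    omega
  have L5 : ∑ᶠ p : ℤ × ℤ, twistTerm conj p.1 (n - p.1)
          (twistTerm conj p.2 (p.1 - p.2) (x.coeff p.2) (y.coeff (p.1 - p.2)))
          (y.coeff (n - p.1))
      = ∑ᶠ p : ℤ × ℤ, twistTerm conj (n - p.2) (n - (n - p.2))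
          (twistTerm conj (n - p.1 - p.2) (n - p.2 - (n - p.1 - p.2)) (x.coeff (n - p.1 - p.2))
            (y.coeff (n - p.2 - (n - p.1 - p.2)))) (y.coeff (n - (n - p.2))) := by
    have := finsum_comp_equiv (M := B)
      (⟨fun p : ℤ × ℤ => (n - p.2, n - p.1 - p.2), fun q : ℤ × ℤ => (q.1 - q.2, n - q.1),
        fun p => by obtain ⟨u, v⟩ := p; simp; try omega,
        fun q => by obtain ⟨u, v⟩ := q; simp; try omega⟩ : (ℤ × ℤ) ≃ (ℤ × ℤ))
      (f := fun p : ℤ × ℤ => twistTerm conj p.1 (n - p.1)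
          (twistTerm conj p.2 (p.1 - p.2) (x.coeff p.2) (y.coeff (p.1 - p.2)))
          (y.coeff (n - p.1)))
    exact this.symm
  have L6 : ∑ᶠ p : ℤ × ℤ, twistTerm conj (n - p.2) (n - (n - p.2))
          (twistTerm conj (n - p.1 - p.2) (n - p.2 - (n - p.1 - p.2)) (x.coeff (n - p.1 - p.2))
            (y.coeff (n - p.2 - (n - p.1 - p.2)))) (y.coeff (n - (n - p.2)))
      = ∑ p ∈ J ×ˢ J, twistTerm conj (n - p.2) (n - (n - p.2))
          (twistTerm conj (n - p.1 - p.2) (n - p.2 - (n - p.1 - p.2)) (x.coeff (n - p.1 - p.2))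
            (y.coeff (n - p.2 - (n - p.1 - p.2)))) (y.coeff (n - (n - p.2))) := by
    refine finsum_eq_finset_sum_of_support_subset _ ?_
    rintro ⟨j, l⟩ hp
    simp only [Function.mem_support] at hp
    obtain ⟨hu, hv⟩ := twistTerm_ne_zero conj hp h0
    obtain ⟨h1, h2⟩ := twistTerm_ne_zero conj hu h0
    have a1 := HahnSeries.order_le_of_coeff_ne_zero h1
    have a2 := HahnSeries.order_le_of_coeff_ne_zero h2
    have a3 := HahnSeries.order_le_of_coeff_ne_zero hv
    simp only [Finset.coe_product, Set.mem_prod, Finset.mem_coe, hJ, Finset.mem_Icc] at *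
    omega
  have R3 : (m x (m y y)).coeff n
      = ∑ p ∈ Ix ×ˢ J, twistTerm conj p.1 (n - p.1) (x.coeff p.1)
          (twistTerm conj p.2 (n - p.1 - p.2) (y.coeff p.2) (y.coeff (n - p.1 - p.2))) := by
    have R1 : (m x (m y y)).coeff n
        = ∑ i ∈ Ix, twistTerm conj i (n - i) (x.coeff i) ((m y y).coeff (n - i)) := by
      apply coeff_eq_sum conj m hm h0
      intro i h1 h2
      have a1 := HahnSeries.order_le_of_coeff_ne_zero h1
      have a2 : ¬ (n - i < y.order + y.order) := fun hlt => h2 (coeff_small conj m hm h0 y y _ hlt)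
      rw [hIx, Finset.mem_Icc]; omega
    rw [R1, Finset.sum_product' Ix J (fun i j => twistTerm conj i (n - i) (x.coeff i)
          (twistTerm conj j (n - i - j) (y.coeff j) (y.coeff (n - i - j))))]
    refine Finset.sum_congr rfl fun i hi => ?_
    have hi' := Finset.mem_Icc.1 (hIx ▸ hi)
    have R2 : (m y y).coeff (n - i)
        = ∑ j ∈ J, twistTerm conj j (n - i - j) (y.coeff j) (y.coeff (n - i - j)) := by
      apply coeff_eq_sum conj m hm h0
      intro j h1 h2
      have a1 := HahnSeries.order_le_of_coeff_ne_zero h1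
      have a2 := HahnSeries.order_le_of_coeff_ne_zero h2
      exact hmemJ j (by omega) (by omega)
    rw [R2, twistTerm_sum_right conj]
  have R4 : ∑ p ∈ Ix ×ˢ J, twistTerm conj p.1 (n - p.1) (x.coeff p.1)
          (twistTerm conj p.2 (n - p.1 - p.2) (y.coeff p.2) (y.coeff (n - p.1 - p.2)))
      = ∑ᶠ p : ℤ × ℤ, twistTerm conj p.1 (n - p.1) (x.coeff p.1)
          (twistTerm conj p.2 (n - p.1 - p.2) (y.coeff p.2) (y.coeff (n - p.1 - p.2))) := by
    refine (finsum_eq_finset_sum_of_support_subset _ ?_).symm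
    rintro ⟨i, j⟩ hp
    simp only [Function.mem_support] at hp
    obtain ⟨hu, hv⟩ := twistTerm_ne_zero conj hp h0
    obtain ⟨h1, h2⟩ := twistTerm_ne_zero conj hv h0
    have a1 := HahnSeries.order_le_of_coeff_ne_zero hu
    have a2 := HahnSeries.order_le_of_coeff_ne_zero h1
    have a3 := HahnSeries.order_le_of_coeff_ne_zero h2
    simp only [Finset.coe_product, Set.mem_prod, Finset.mem_coe, hIx, hJ, Finset.mem_Icc]
    omega
  have R5 : ∑ᶠ p : ℤ × ℤ, twistTerm conj p.1 (n - p.1) (x.coeff p.1)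
          (twistTerm conj p.2 (n - p.1 - p.2) (y.coeff p.2) (y.coeff (n - p.1 - p.2)))
      = ∑ᶠ p : ℤ × ℤ, twistTerm conj (n - p.1 - p.2) (n - (n - p.1 - p.2)) (x.coeff (n - p.1 - p.2))
          (twistTerm conj p.1 (n - (n - p.1 - p.2) - p.1) (y.coeff p.1)
            (y.coeff (n - (n - p.1 - p.2) - p.1))) := by
    have := finsum_comp_equiv (M := B)
      (⟨fun p : ℤ × ℤ => (n - p.1 - p.2, p.1), fun q : ℤ × ℤ => (q.2, n - q.1 - q.2),
        fun p => by obtain ⟨u, v⟩ := p; simp; try omega,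
        fun q => by obtain ⟨u, v⟩ := q; simp; try omega⟩ : (ℤ × ℤ) ≃ (ℤ × ℤ))
      (f := fun p : ℤ × ℤ => twistTerm conj p.1 (n - p.1) (x.coeff p.1)
          (twistTerm conj p.2 (n - p.1 - p.2) (y.coeff p.2) (y.coeff (n - p.1 - p.2))))
    exact this.symm
  have R6 : ∑ᶠ p : ℤ × ℤ, twistTerm conj (n - p.1 - p.2) (n - (n - p.1 - p.2)) (x.coeff (n - p.1 - p.2))
          (twistTerm conj p.1 (n - (n - p.1 - p.2) - p.1) (y.coeff p.1)
            (y.coeff (n - (n - p.1 - p.2) - p.1)))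
      = ∑ p ∈ J ×ˢ J, twistTerm conj (n - p.1 - p.2) (n - (n - p.1 - p.2)) (x.coeff (n - p.1 - p.2))
          (twistTerm conj p.1 (n - (n - p.1 - p.2) - p.1) (y.coeff p.1)
            (y.coeff (n - (n - p.1 - p.2) - p.1))) := by
    refine finsum_eq_finset_sum_of_support_subset _ ?_
    rintro ⟨j, l⟩ hp
    simp only [Function.mem_support] at hp
    obtain ⟨hu, hv⟩ := twistTerm_ne_zero conj hp h0
    obtain ⟨h1, h2⟩ := twistTerm_ne_zero conj hv h0
    have a1 := HahnSeries.order_le_of_coeff_ne_zero hu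
    have a2 := HahnSeries.order_le_of_coeff_ne_zero h1
    have a3 := HahnSeries.order_le_of_coeff_ne_zero h2
    simp only [Finset.coe_product, Set.mem_prod, Finset.mem_coe, hJ, Finset.mem_Icc] at *
    omega
  rw [L3, L4, L5, L6, R3, R4, R5, R6]
  have key : ∑ p ∈ J ×ˢ J,
      (twistTerm conj (n - p.2) (n - (n - p.2))
          (twistTerm conj (n - p.1 - p.2) (n - p.2 - (n - p.1 - p.2)) (x.coeff (n - p.1 - p.2))
            (y.coeff (n - p.2 - (n - p.1 - p.2)))) (y.coeff (n - (n - p.2)))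
        - twistTerm conj (n - p.1 - p.2) (n - (n - p.1 - p.2)) (x.coeff (n - p.1 - p.2))
          (twistTerm conj p.1 (n - (n - p.1 - p.2) - p.1) (y.coeff p.1)
            (y.coeff (n - (n - p.1 - p.2) - p.1)))) = 0 := by
    refine Finset.sum_involution (fun p _ => Prod.swap p) ?_ ?_ ?_ ?_
    · rintro ⟨j, l⟩ _
      simp only [Prod.fst_swap, Prod.snd_swap, Prod.swap_prod_mk]
      rw [sub_add_sub_comm, sub_eq_zero]
      exact altR_main conj hadd hanti hinv htr hnm x y n j l
    · rintro ⟨j, l⟩ _ hne heq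
      apply hne
      have : l = j := (Prod.ext_iff.1 heq).1
      subst this
      simp only [sub_eq_zero]
      exact altR_diag conj hadd hanti hinv htr hnm x y n l
    · rintro ⟨j, l⟩ hp
      simp only [Finset.mem_product] at hp ⊢
      exact ⟨hp.2, hp.1⟩
    · rintro ⟨j, l⟩ _
      simp
  rw [Finset.sum_sub_distrib] at key
  exact sub_eq_zero.mp key

end

end TwistedLaurentAux

/-- Let `B` be a quadratic associative division algebra over `K` with involution
`b ↦ b̄`, and let `m` be the multiplication on the formal Laurent series `B((t))`
(modelled as Hahn series over `ℤ`) twisted by the involution, i.e. determined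
coefficientwise by the `twistTerm` convolution. Then `m` is alternative, and
`ν(Σ tⁱbᵢ) = min{i : bᵢ ≠ 0}` is a valuation: `ν(xy) = ν(x) + ν(y)` for nonzero
`x, y` (in particular `xy ≠ 0`). -/
theorem twisted_laurent_alternative_and_valuation
    (K : Type*) [Field K] (B : Type*) [DivisionRing B] [Algebra K B]
    (conj : B → B)
    (hadd : ∀ x y : B, conj (x + y) = conj x + conj y)
    (hanti : ∀ x y : B, conj (x * y) = conj y * conj x)
    (hinv : ∀ x : B, conj (conj x) = x)
    (htr : ∀ b : B, ∃ k : K, b + conj b = algebraMap K B k)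
    (hnm : ∀ b : B, ∃ k : K, b * conj b = algebraMap K B k)
    (m : HahnSeries ℤ B → HahnSeries ℤ B → HahnSeries ℤ B)
    (hm : ∀ (x y : HahnSeries ℤ B) (n : ℤ), (m x y).coeff n =
        ∑ᶠ i : ℤ, twistTerm conj i (n - i) (x.coeff i) (y.coeff (n - i))) :
    (∀ x y : HahnSeries ℤ B, m x (m x y) = m (m x x) y) ∧
    (∀ x y : HahnSeries ℤ B, m (m x y) y = m x (m y y)) ∧
    (∀ x y : HahnSeries ℤ B, x ≠ 0 → y ≠ 0 →
        m x y ≠ 0 ∧ (m x y).order = x.order + y.order) := by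
  have h0 : conj 0 = 0 := by
    have h := hadd 0 0
    rw [add_zero] at h
    exact (add_eq_left.mp h.symm)
  refine ⟨fun x y => ?_, fun x y => ?_, fun x y hx hy => ?_⟩
  · exact TwistedLaurentAux.leftalt conj m hm h0 hadd hanti hinv htr hnm x y
  · exact TwistedLaurentAux.rightalt conj m hm h0 hadd hanti hinv htr hnm x y
  · exact TwistedLaurentAux.val_lemma conj m hm h0 hinv x y hx hy
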